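/- Let k be a field and Σ, Λ two k-algebras. Suppose G is a functor from the category of finite-dimensional left Σ-modules to the category of finite-dimensional left Λ-modules such that: G(M) is indecomposable for every finite-dimensional indecomposable Σ-module M; G(M) ≅ G(N) implies M ≅ N for finite-dimensional Σ-modules M, N; and there exist constants c, c' ∈ ℕ with endol(M) ≤ c·endol(G(M)) and endol(G(M)) ≤ c'·endol(M) for every finite-dimensional indecomposable Σ-module M. If Σ satisfies EBTII, then Λ satisfies EBTII. -/

import Mathlib

open scoped TensorProduct

universe u

/-- The length of a module, computed as the Krull dimension (longest chain) of its
lattice of submodules. -/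
noncomputable def moduleLength (R M : Type*) [Ring R] [AddCommGroup M] [Module R M] : ℕ∞ :=
  WithBot.unbotD 0 (Order.krullDim (Submodule R M))

/-- The endolength of a module `M`: its length as a module over its endomorphism ring
`Module.End R M`, which acts on `M` by evaluation. -/
noncomputable def endol (R M : Type*) [Ring R] [AddCommGroup M] [Module R M] : ℕ∞ :=
  moduleLength (Module.End R M) M

/-- A module is indecomposable if it is nonzero and is not the (internal) direct sum of
two nonzero submodules. -/
def IsIndecomposableModule (R : Type*) (M : Type*) [Ring R] [AddCommGroup M] [Module R M] :
    Prop :=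
  Nontrivial M ∧ ∀ N₁ N₂ : Submodule R M, IsCompl N₁ N₂ → N₁ = ⊥ ∨ N₂ = ⊥

/-- A bundled finite-dimensional left module over a `k`-algebra `Γ`, with `k` acting
centrally (through the `Γ`-action). -/
structure FDModuleOver (k Γ : Type u) [Field k] [Ring Γ] [Algebra k Γ] : Type (u + 1) where
  carrier : Type u
  [isAddCommGroup : AddCommGroup carrier]
  [isModuleK : Module k carrier]
  [isModule : Module Γ carrier]
  [isTower : IsScalarTower k Γ carrier]
  [isFD : FiniteDimensional k carrier]

attribute [instance] FDModuleOver.isAddCommGroup FDModuleOver.isModuleK FDModuleOver.isModule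
  FDModuleOver.isTower FDModuleOver.isFD

instance (k Γ : Type u) [Field k] [Ring Γ] [Algebra k Γ] : CoeSort (FDModuleOver k Γ) (Type u) :=
  ⟨FDModuleOver.carrier⟩

section RepType

variable (k Γ : Type u) [Field k] [Ring Γ] [Algebra k Γ]

/-- There is an infinite family of pairwise non-isomorphic finite-dimensional
indecomposable `Γ`-modules, all of endolength `d`. -/
def HasInfFamilyOfEndolength (d : ℕ) : Prop :=
  ∃ M : ℕ → FDModuleOver k Γ,
    (∀ i, IsIndecomposableModule Γ (M i).carrier) ∧
    (∀ i, endol Γ (M i).carrier = (d : ℕ∞)) ∧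
    ∀ i j, i ≠ j → IsEmpty ((M i).carrier ≃ₗ[Γ] (M j).carrier)

/-- `Γ` is e-discrete: for each `d` there are only finitely many isomorphism classes of
finite-dimensional indecomposable `Γ`-modules of endolength `d`. -/
def EDiscrete : Prop := ∀ d : ℕ, ¬ HasInfFamilyOfEndolength k Γ d

/-- `Γ` has infinite representation type: there are infinitely many pairwise
non-isomorphic finite-dimensional indecomposable `Γ`-modules. -/
def HasInfiniteRepType : Prop :=
  ∃ M : ℕ → FDModuleOver k Γ,
    (∀ i, IsIndecomposableModule Γ (M i).carrier) ∧
    ∀ i j, i ≠ j → IsEmpty ((M i).carrier ≃ₗ[Γ] (M j).carrier)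

/-- `Γ` satisfies EBTII: there is an infinite strictly increasing sequence of endolengths
`d₀ < d₁ < ⋯` such that for each `dᵢ` there are infinitely many pairwise non-isomorphic
finite-dimensional indecomposable `Γ`-modules of endolength `dᵢ`. -/
def SatisfiesEBTII : Prop :=
  ∃ d : ℕ → ℕ, StrictMono d ∧ ∀ i, HasInfFamilyOfEndolength k Γ (d i)

end RepType


/-- If for every `n` there is an endolength `e ≥ n` with an infinite family, then EBTII holds. -/
lemma suffices_unbounded {k Λ : Type u} [Field k] [Ring Λ] [Algebra k Λ]
    (h : ∀ n : ℕ, ∃ e : ℕ, n ≤ e ∧ HasInfFamilyOfEndolength k Λ e) : SatisfiesEBTII k Λ := by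
  choose e he hfam using h
  let d : ℕ → ℕ := fun n => Nat.rec (e 0) (fun _ prev => e (prev + 1)) n
  have hd0 : ∀ n, d (n + 1) = e (d n + 1) := fun n => rfl
  refine ⟨d, strictMono_nat_of_lt_succ fun n => ?_, fun n => ?_⟩
  · have := he (d n + 1); rw [hd0]; omega
  · cases n with
    | zero => exact hfam 0
    | succ m => rw [hd0]; exact hfam _

/-- Suppose `G` carries finite-dimensional `A`-modules to
finite-dimensional `Λ`-modules, preserves indecomposability, reflects isomorphism
classes, and controls endolength of indecomposables. If `A` satisfies EBTII, then so
does `Λ`. -/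
theorem stmt_16 {k A Λ : Type u} [Field k] [Ring A] [Algebra k A] [Ring Λ] [Algebra k Λ]
    (G : FDModuleOver k A → FDModuleOver k Λ)
    (hind : ∀ M : FDModuleOver k A, IsIndecomposableModule A M.carrier →
      IsIndecomposableModule Λ (G M).carrier)
    (hrefl : ∀ M N : FDModuleOver k A,
      Nonempty ((G M).carrier ≃ₗ[Λ] (G N).carrier) →
      Nonempty (M.carrier ≃ₗ[A] N.carrier))
    (c c' : ℕ)
    (hctrl : ∀ M : FDModuleOver k A, IsIndecomposableModule A M.carrier →
      endol A M.carrier ≤ (c : ℕ∞) * endol Λ (G M).carrier ∧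
      endol Λ (G M).carrier ≤ (c' : ℕ∞) * endol A M.carrier)
    (hA : SatisfiesEBTII k A) :
    SatisfiesEBTII k Λ := by
  obtain ⟨d, hd, hfam⟩ := hA
  rcases Nat.eq_zero_or_pos c with hc | hc
  · exfalso
    obtain ⟨M, h1, h2, _⟩ := hfam 1
    have hle := (hctrl (M 0) (h1 0)).1
    rw [hc, h2 0] at hle
    simp only [Nat.cast_zero, zero_mul, nonpos_iff_eq_zero, le_zero_iff, Nat.cast_eq_zero] at hle
    have h01 : d 0 < d 1 := hd Nat.zero_lt_one
    omega
  apply suffices_unbounded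
  intro n
  obtain ⟨M, h1, h2, h3⟩ := hfam (c * n)
  have hDi : c * n ≤ d (c * n) := hd.le_apply
  set D := d (c * n) with hD
  have hub : ∀ j, endol Λ (G (M j)).carrier ≤ ((c' * D : ℕ) : ℕ∞) := fun j => by
    have h := (hctrl (M j) (h1 j)).2
    rw [h2 j] at h
    calc endol Λ (G (M j)).carrier ≤ (c' : ℕ∞) * (D : ℕ∞) := h
      _ = ((c' * D : ℕ) : ℕ∞) := by push_cast; ring
  have hnetop : ∀ j, endol Λ (G (M j)).carrier ≠ ⊤ := fun j =>
    ne_top_of_le_ne_top (ENat.coe_ne_top _) (hub j)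
  let g : ℕ → Fin (c' * D + 1) := fun j =>
    ⟨(endol Λ (G (M j)).carrier).toNat, by
      have := ENat.toNat_le_toNat (hub j) (ENat.coe_ne_top _)
      simpa using Nat.lt_succ_of_le this⟩
  obtain ⟨y, hy⟩ := Finite.exists_infinite_fiber g
  haveI : Infinite (g ⁻¹' {y}) := hy
  let emb := Infinite.natEmbedding (g ⁻¹' {y})
  have hemb : ∀ j, endol Λ (G (M (emb j : ℕ))).carrier = ((y : ℕ) : ℕ∞) := fun j => by
    have hmem : g (emb j : ℕ) = y := (emb j).2
    have : ((g (emb j : ℕ) : ℕ) : ℕ∞) = endol Λ (G (M (emb j : ℕ))).carrier := by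
      simpa [g] using ENat.coe_toNat (hnetop (emb j : ℕ))
    rw [hmem] at this
    exact this.symm
  refine ⟨(y : ℕ), ?_, fun j => G (M (emb j : ℕ)), fun j => hind _ (h1 _), fun j => hemb j,
    fun a b hab => ?_⟩
  · -- n ≤ y
    have h := (hctrl (M (emb 0 : ℕ)) (h1 _)).1
    rw [h2, hemb 0] at h
    have h' : (D : ℕ∞) ≤ ((c * (y : ℕ) : ℕ) : ℕ∞) := by
      calc (D : ℕ∞) ≤ (c : ℕ∞) * ((y : ℕ) : ℕ∞) := h
        _ = ((c * (y : ℕ) : ℕ) : ℕ∞) := by push_cast; ring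
    have hD' : D ≤ c * (y : ℕ) := Nat.cast_le.mp h'
    have : c * n ≤ c * (y : ℕ) := le_trans hDi hD'
    exact Nat.le_of_mul_le_mul_left this hc
  · refine ⟨fun φ => ?_⟩
    have hne : (emb a : ℕ) ≠ (emb b : ℕ) := fun h =>
      hab (emb.injective (Subtype.ext h))
    exact (h3 _ _ hne).false (hrefl _ _ ⟨φ⟩).some
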